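/- (Inclusion Principle.) Let Z, V, W be nonempty sets, S : Z × V → [0,∞) and R : Z × W → [0,∞), and let p₁, p₂, q₁, q₂ satisfy condition (★) with p₁ < p₂. Assume that for every m ∈ ℕ and all z₁, …, z_m ∈ Z the quantities sup_{w∈W} Σ_{j=1}^m R(z_j, w)^{p} (for p = p₁ and p = p₂) and sup_{v∈V} Σ_{j=1}^m S(z_j, v)^{q} (for q = q₁ and q = q₂) are finite. If there is a constant C > 0 such that sup_{v∈V} Σ_{j=1}^m S(z_j, v)^{q₁} ≤ C · sup_{w∈W} Σ_{j=1}^m R(z_j, w)^{p₁} for every m ∈ ℕ and all z₁, …, z_m ∈ Z, then (sup_{v∈V} Σ_{j=1}^m S(z_j, v)^{q₂})^{q₁p₂/(q₂p₁)} ≤ C^{p₂/p₁} · sup_{w∈W} Σ_{j=1}^m R(z_j, w)^{p₂} for every m ∈ ℕ and all z₁, …, z_m ∈ Z. -/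

import Mathlib

open scoped BigOperators

private lemma sum_rpow_le_rpow_sum_aux {ι : Type*} (s : Finset ι) (a : ι → ℝ)
    (ha : ∀ i ∈ s, 0 ≤ a i) {t : ℝ} (ht : 1 ≤ t) :
    ∑ i ∈ s, a i ^ t ≤ (∑ i ∈ s, a i) ^ t := by
  have hsum : 0 ≤ ∑ i ∈ s, a i := Finset.sum_nonneg ha
  have ht0 : (0:ℝ) ≤ t - 1 := by linarith
  have htne : t - 1 + 1 ≠ 0 := by intro hcon; simp at hcon; linarith
  calc ∑ i ∈ s, a i ^ t = ∑ i ∈ s, a i ^ (t - 1) * a i := by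
        refine Finset.sum_congr rfl fun i hi => ?_
        rw [show t = t - 1 + 1 by ring, Real.rpow_add' (ha i hi) htne, Real.rpow_one]; norm_num
    _ ≤ ∑ i ∈ s, (∑ j ∈ s, a j) ^ (t - 1) * a i := by
        refine Finset.sum_le_sum fun i hi => ?_
        exact mul_le_mul_of_nonneg_right
          (Real.rpow_le_rpow (ha i hi) (Finset.single_le_sum ha hi) ht0) (ha i hi)
    _ = (∑ j ∈ s, a j) ^ (t - 1) * ∑ i ∈ s, a i := by rw [← Finset.mul_sum]
    _ = (∑ i ∈ s, a i) ^ t := by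
        rw [show t = t - 1 + 1 by ring, Real.rpow_add' hsum htne, Real.rpow_one]; norm_num

/-- **Inclusion Principle.** Let `Z, V, W` be nonempty sets,
`S : Z × V → [0,∞)`, `R : Z × W → [0,∞)`, and `p₁, p₂, q₁, q₂` satisfy condition (★)
with `p₁ < p₂`.  If `sup_v ∑ S(zⱼ,v)^{q₁} ≤ C ⋅ sup_w ∑ R(zⱼ,w)^{p₁}` for all finite
families, then `(sup_v ∑ S(zⱼ,v)^{q₂})^{q₁p₂/(q₂p₁)} ≤ C^{p₂/p₁} ⋅ sup_w ∑ R(zⱼ,w)^{p₂}`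
for all finite families. -/
theorem stmt2 {Z V W : Type*} [Nonempty Z] [Nonempty V] [Nonempty W]
    (S : Z → V → ℝ) (R : Z → W → ℝ)
    (hS : ∀ z v, 0 ≤ S z v) (hR : ∀ z w, 0 ≤ R z w)
    (p₁ p₂ q₁ q₂ : ℝ)
    (hp₁ : 1 ≤ p₁) (hp₁₂ : p₁ ≤ p₂) (hq₁ : 1 ≤ q₁) (hq₁₂ : q₁ ≤ q₂)
    (hpq₁ : p₁ ≤ q₁) (hpq₂ : p₂ ≤ q₂)
    (hstar : 1 / p₁ - 1 / q₁ ≤ 1 / p₂ - 1 / q₂)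
    (hlt : p₁ < p₂)
    (hRbdd : ∀ (p : ℝ), p = p₁ ∨ p = p₂ → ∀ (m : ℕ) (z : Fin m → Z),
      BddAbove (Set.range fun w : W => ∑ j, R (z j) w ^ p))
    (hSbdd : ∀ (q : ℝ), q = q₁ ∨ q = q₂ → ∀ (m : ℕ) (z : Fin m → Z),
      BddAbove (Set.range fun v : V => ∑ j, S (z j) v ^ q))
    (C : ℝ) (hC : 0 < C)
    (h : ∀ (m : ℕ) (z : Fin m → Z),
      (⨆ v : V, ∑ j, S (z j) v ^ q₁) ≤ C * ⨆ w : W, ∑ j, R (z j) w ^ p₁) :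
    ∀ (m : ℕ) (z : Fin m → Z),
      (⨆ v : V, ∑ j, S (z j) v ^ q₂) ^ (q₁ * p₂ / (q₂ * p₁)) ≤
        C ^ (p₂ / p₁) * ⨆ w : W, ∑ j, R (z j) w ^ p₂ := by
  have hp₁0 : (0:ℝ) < p₁ := lt_of_lt_of_le one_pos hp₁
  have hp₂0 : (0:ℝ) < p₂ := lt_of_lt_of_le hp₁0 hp₁₂
  have hq₁0 : (0:ℝ) < q₁ := lt_of_lt_of_le one_pos hq₁
  have hq₂0 : (0:ℝ) < q₂ := lt_of_lt_of_le hq₁0 hq₁₂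
  have hqlt : q₁ < q₂ := by
    by_contra hcon
    push_neg at hcon
    have h1 : 1/p₂ < 1/p₁ := one_div_lt_one_div_of_lt hp₁0 hlt
    have h2 : 1/q₁ ≤ 1/q₂ := one_div_le_one_div_of_le hq₂0 hcon
    linarith
  -- p₂ q₁ ≤ p₁ q₂ from (★)
  have hkey : p₂ * q₁ ≤ p₁ * q₂ := by
    have hstar' : (1 * q₁ - p₁ * 1) * (p₂ * q₂) ≤ (1 * q₂ - p₂ * 1) * (p₁ * q₁) := by
      rw [div_sub_div _ _ hp₁0.ne' hq₁0.ne', div_sub_div _ _ hp₂0.ne' hq₂0.ne'] at hstar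
      exact (div_le_div_iff₀ (by positivity) (by positivity)).mp hstar
    nlinarith [hstar', mul_nonneg (mul_nonneg hq₂0.le (sub_nonneg.2 hp₁₂))
      (sub_nonneg.2 hpq₁), hp₁0, mul_pos hp₁0 hq₂0]
  have hs_ge : p₂ ≤ p₁ * (q₂ / q₁) := by
    rw [mul_div_assoc'] at *
    rw [le_div_iff₀ hq₁0]
    linarith [hkey]
  -- single point bounds
  have hS1bdd : ∀ z0 : Z, BddAbove (Set.range fun v : V => S z0 v ^ q₁) := by
    intro z0
    have := hSbdd q₁ (Or.inl rfl) 1 (fun _ => z0)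
    simpa using this
  have hR1bdd : ∀ z0 : Z, BddAbove (Set.range fun w : W => R z0 w ^ p₁) := by
    intro z0
    have := hRbdd p₁ (Or.inl rfl) 1 (fun _ => z0)
    simpa using this
  -- Key Lemma 1: natural weights via repetition
  have key1 : ∀ (m : ℕ) (z : Fin m → Z) (n : Fin m → ℕ) (v : V),
      (∑ j, (n j : ℝ) * S (z j) v ^ q₁) ≤ C * ⨆ w : W, ∑ j, (n j : ℝ) * R (z j) w ^ p₁ := by
    intro m z n v
    have hcard : Fintype.card (Σ j : Fin m, Fin (n j)) = ∑ j, n j := by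
      simp [Fintype.card_sigma]
    let e : (Σ j : Fin m, Fin (n j)) ≃ Fin (∑ j, n j) := Fintype.equivFinOfCardEq hcard
    set z' : Fin (∑ j, n j) → Z := fun k => z (e.symm k).1 with hz'
    have hsum : ∀ f : Z → ℝ, (∑ k, f (z' k)) = ∑ j, (n j : ℝ) * f (z j) := by
      intro f
      have h1 : (∑ k, f (z' k)) = ∑ p : (Σ j : Fin m, Fin (n j)), f (z p.1) := by
        rw [← Equiv.sum_comp e (fun k => f (z' k))]
        refine Finset.sum_congr rfl fun p _ => ?_
        simp [hz']
      rw [h1, ← Finset.univ_sigma_univ, Finset.sum_sigma]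
      refine Finset.sum_congr rfl fun j _ => ?_
      simp [Finset.sum_const, nsmul_eq_mul]
    calc ∑ j, (n j:ℝ) * S (z j) v ^ q₁ = ∑ k, S (z' k) v ^ q₁ :=
          (hsum (fun x => S x v ^ q₁)).symm
      _ ≤ ⨆ v' : V, ∑ k, S (z' k) v' ^ q₁ := le_ciSup (hSbdd q₁ (Or.inl rfl) _ z') v
      _ ≤ C * ⨆ w : W, ∑ k, R (z' k) w ^ p₁ := h _ z'
      _ = C * ⨆ w : W, ∑ j, (n j:ℝ) * R (z j) w ^ p₁ := by
          rw [show (⨆ w : W, ∑ k, R (z' k) w ^ p₁)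
              = ⨆ w : W, ∑ j, (n j:ℝ) * R (z j) w ^ p₁ from
            iSup_congr fun w => hsum (fun x => R x w ^ p₁)]
  -- main part
  intro m z
  -- single point sups for R at p₁
  set MR : Fin m → ℝ := fun j => ⨆ w : W, R (z j) w ^ p₁ with hMRdef
  have hMRge : ∀ j w, R (z j) w ^ p₁ ≤ MR j := fun j w => le_ciSup (hR1bdd (z j)) w
  have hMR0 : ∀ j, 0 ≤ MR j := fun j =>
    le_trans (Real.rpow_nonneg (hR _ _) _) (hMRge j (Classical.arbitrary W))
  set D : ℝ := ∑ j, MR j with hDdef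
  have hD0 : 0 ≤ D := Finset.sum_nonneg fun j _ => hMR0 j
  -- Key Lemma 2: real weights
  have key2 : ∀ (lam : Fin m → ℝ), (∀ j, 0 ≤ lam j) → ∀ v : V,
      (∑ j, lam j * S (z j) v ^ q₁) ≤ C * ⨆ w : W, ∑ j, lam j * R (z j) w ^ p₁ := by
    intro lam hlam v
    have hGbdd : BddAbove (Set.range fun w : W => ∑ j, lam j * R (z j) w ^ p₁) := by
      refine ⟨∑ j, lam j * MR j, ?_⟩
      rintro x ⟨w, rfl⟩
      exact Finset.sum_le_sum fun j _ => mul_le_mul_of_nonneg_left (hMRge j w) (hlam j)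
    set G := ⨆ w : W, ∑ j, lam j * R (z j) w ^ p₁ with hGdef
    have hGge : ∀ w, ∑ j, lam j * R (z j) w ^ p₁ ≤ G := fun w => le_ciSup hGbdd w
    refine le_of_forall_gt_imp_ge_of_dense fun c hc => ?_
    set ε := c - C * G with hεdef
    have hε : 0 < ε := by simp [hεdef]; linarith
    obtain ⟨K, hK⟩ := exists_nat_gt (max 1 (C * D / ε))
    have hK1 : (1:ℝ) ≤ K := le_of_lt (lt_of_le_of_lt (le_max_left _ _) hK)
    have hKpos : (0:ℝ) < K := lt_of_lt_of_le one_pos hK1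
    set n : Fin m → ℕ := fun j => ⌈lam j * K⌉₊ with hn
    have hn1 : ∀ j, lam j * K ≤ n j := fun j => Nat.le_ceil _
    have hn2 : ∀ j, (n j : ℝ) ≤ lam j * K + 1 := fun j =>
      le_of_lt (Nat.ceil_lt_add_one (mul_nonneg (hlam j) hKpos.le))
    have hnR : ∀ w, ∑ j, (n j:ℝ) * R (z j) w ^ p₁ ≤ K * G + D := by
      intro w
      calc ∑ j, (n j:ℝ) * R (z j) w ^ p₁
          ≤ ∑ j, (lam j * K + 1) * R (z j) w ^ p₁ :=
            Finset.sum_le_sum fun j _ =>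
              mul_le_mul_of_nonneg_right (hn2 j) (Real.rpow_nonneg (hR _ _) _)
        _ = K * (∑ j, lam j * R (z j) w ^ p₁) + ∑ j, R (z j) w ^ p₁ := by
            rw [Finset.mul_sum, ← Finset.sum_add_distrib]
            exact Finset.sum_congr rfl fun j _ => by ring
        _ ≤ K * G + D :=
            add_le_add (mul_le_mul_of_nonneg_left (hGge w) hKpos.le)
              (Finset.sum_le_sum fun j _ => hMRge j w)
    have hεK : C * D / K ≤ ε := by
      rw [div_le_iff₀ hKpos]
      have h' : C * D / ε < K := lt_of_le_of_lt (le_max_right _ _) hK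
      rw [div_lt_iff₀ hε] at h'
      nlinarith
    have step1 : ∑ j, lam j * S (z j) v ^ q₁ ≤ (1/K) * ∑ j, (n j:ℝ) * S (z j) v ^ q₁ := by
      rw [Finset.mul_sum]
      refine Finset.sum_le_sum fun j _ => ?_
      rw [← mul_assoc]
      refine mul_le_mul_of_nonneg_right ?_ (Real.rpow_nonneg (hS _ _) _)
      rw [div_mul_eq_mul_div, one_mul, le_div_iff₀ hKpos]
      exact hn1 j
    calc ∑ j, lam j * S (z j) v ^ q₁
        ≤ (1/K) * ∑ j, (n j:ℝ) * S (z j) v ^ q₁ := step1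
      _ ≤ (1/K) * (C * ⨆ w : W, ∑ j, (n j:ℝ) * R (z j) w ^ p₁) :=
          mul_le_mul_of_nonneg_left (key1 m z n v) (by positivity)
      _ ≤ (1/K) * (C * (K * G + D)) :=
          mul_le_mul_of_nonneg_left
            (mul_le_mul_of_nonneg_left (ciSup_le hnR) hC.le) (by positivity)
      _ = C * G + C * D / K := by field_simp
      _ ≤ C * G + ε := add_le_add_right hεK _
      _ = c := by rw [hεdef]; ring
  -- B and its properties
  set B := ⨆ w : W, ∑ j, R (z j) w ^ p₂ with hBdef
  have hBbdd := hRbdd p₂ (Or.inr rfl) m z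
  have hBge : ∀ w, ∑ j, R (z j) w ^ p₂ ≤ B := fun w => le_ciSup hBbdd w
  have hB0 : 0 ≤ B :=
    le_trans (Finset.sum_nonneg fun j _ => Real.rpow_nonneg (hR _ _) _)
      (hBge (Classical.arbitrary W))
  have hcon : Real.HolderConjugate (q₂/(q₂-q₁)) (q₂/q₁) := by
    rw [Real.holderConjugate_iff]
    constructor
    · rw [lt_div_iff₀ (by linarith : (0:ℝ) < q₂ - q₁)]
      linarith
    · rw [← one_div, ← one_div, one_div_div, one_div_div]
      field_simp
      ring
  -- claim: pointwise bound for the q₂-sums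
  have claim : ∀ v : V, (∑ j, S (z j) v ^ q₂) ≤ (C * B ^ (p₁/p₂)) ^ (q₂/q₁) := by
    intro v
    set T := ∑ j, S (z j) v ^ q₂ with hTdef
    have hT0 : 0 ≤ T := Finset.sum_nonneg fun j _ => Real.rpow_nonneg (hS _ _) _
    rcases eq_or_lt_of_le hT0 with hT0' | hTpos
    · rw [← hT0']
      exact Real.rpow_nonneg (mul_nonneg hC.le (Real.rpow_nonneg hB0 _)) _
    set lam : Fin m → ℝ := fun j => S (z j) v ^ (q₂ - q₁) with hlamdef
    have hlam0 : ∀ j, 0 ≤ lam j := fun j => Real.rpow_nonneg (hS _ _) _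
    have hTe : ∑ j, lam j * S (z j) v ^ q₁ = T := by
      refine Finset.sum_congr rfl fun j _ => ?_
      rw [← Real.rpow_add' (hS _ _) (by simp; linarith : q₂ - q₁ + q₁ ≠ 0), sub_add_cancel]
    have h1 : T ≤ C * ⨆ w : W, ∑ j, lam j * R (z j) w ^ p₁ := by
      rw [← hTe]; exact key2 lam hlam0 v
    have h2 : ∀ w, ∑ j, lam j * R (z j) w ^ p₁ ≤ T ^ ((q₂-q₁)/q₂) * B ^ (p₁/p₂) := by
      intro w
      have hH := Real.inner_le_Lp_mul_Lq_of_nonneg (s := Finset.univ)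
        (f := lam) (g := fun j => R (z j) w ^ p₁)
        hcon (fun j _ => hlam0 j) (fun j _ => Real.rpow_nonneg (hR _ _) _)
      refine le_trans hH ?_
      have e1 : ∑ j, lam j ^ (q₂/(q₂-q₁)) = T := by
        refine Finset.sum_congr rfl fun j _ => ?_
        rw [hlamdef, ← Real.rpow_mul (hS _ _)]
        congr 1
        rw [mul_comm, div_mul_cancel₀ _ (sub_ne_zero.2 hqlt.ne')]
      rw [e1, one_div_div, one_div_div]
      refine mul_le_mul_of_nonneg_left ?_ (Real.rpow_nonneg hT0 _)
      have e2 : ∑ j, (R (z j) w ^ p₁) ^ (q₂/q₁) = ∑ j, R (z j) w ^ (p₁ * (q₂/q₁)) :=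
        Finset.sum_congr rfl fun j _ => (Real.rpow_mul (hR _ _) _ _).symm
      have ht1 : 1 ≤ (p₁ * (q₂/q₁)) / p₂ := (one_le_div hp₂0).2 hs_ge
      have e3 : ∑ j, R (z j) w ^ (p₁ * (q₂/q₁)) ≤ B ^ ((p₁ * (q₂/q₁)) / p₂) := by
        calc ∑ j, R (z j) w ^ (p₁ * (q₂/q₁))
            = ∑ j, (R (z j) w ^ p₂) ^ ((p₁ * (q₂/q₁)) / p₂) := by
              refine Finset.sum_congr rfl fun j _ => ?_
              rw [← Real.rpow_mul (hR _ _)]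
              congr 1
              field_simp
          _ ≤ (∑ j, R (z j) w ^ p₂) ^ ((p₁ * (q₂/q₁)) / p₂) :=
              sum_rpow_le_rpow_sum_aux _ _
                (fun j _ => Real.rpow_nonneg (hR _ _) _) ht1
          _ ≤ B ^ ((p₁ * (q₂/q₁)) / p₂) :=
              Real.rpow_le_rpow
                (Finset.sum_nonneg fun j _ => Real.rpow_nonneg (hR _ _) _)
                (hBge w) (by positivity)
      calc (∑ j, (R (z j) w ^ p₁) ^ (q₂/q₁)) ^ (q₁/q₂)
          ≤ (B ^ ((p₁ * (q₂/q₁)) / p₂)) ^ (q₁/q₂) := by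
            refine Real.rpow_le_rpow
              (Finset.sum_nonneg fun j _ => Real.rpow_nonneg (Real.rpow_nonneg (hR _ _) _) _)
              ?_ (by positivity)
            rw [e2]; exact e3
        _ = B ^ (p₁/p₂) := by
            rw [← Real.rpow_mul hB0]
            congr 1
            field_simp
    have h3 : T ≤ C * (T ^ ((q₂-q₁)/q₂) * B ^ (p₁/p₂)) :=
      le_trans h1 (mul_le_mul_of_nonneg_left (ciSup_le h2) hC.le)
    have hTsplit : T = T ^ ((q₂-q₁)/q₂) * T ^ (q₁/q₂) := by
      rw [← Real.rpow_add hTpos, ← add_div, sub_add_cancel, div_self hq₂0.ne',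
        Real.rpow_one]
    have h4 : T ^ ((q₂-q₁)/q₂) * T ^ (q₁/q₂) ≤ T ^ ((q₂-q₁)/q₂) * (C * B ^ (p₁/p₂)) := by
      calc T ^ ((q₂-q₁)/q₂) * T ^ (q₁/q₂) = T := hTsplit.symm
        _ ≤ C * (T ^ ((q₂-q₁)/q₂) * B ^ (p₁/p₂)) := h3
        _ = T ^ ((q₂-q₁)/q₂) * (C * B ^ (p₁/p₂)) := by ring
    have h5 : T ^ (q₁/q₂) ≤ C * B ^ (p₁/p₂) :=
      le_of_mul_le_mul_left h4 (Real.rpow_pos_of_pos hTpos _)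
    calc T = (T ^ (q₁/q₂)) ^ (q₂/q₁) := by
          rw [← Real.rpow_mul hT0, div_mul_div_comm, mul_comm q₁ q₂,
            div_self (by positivity : q₂ * q₁ ≠ 0), Real.rpow_one]
      _ ≤ (C * B ^ (p₁/p₂)) ^ (q₂/q₁) :=
          Real.rpow_le_rpow (Real.rpow_nonneg hT0 _) h5 (by positivity)
  -- finish
  have hAbdd := hSbdd q₂ (Or.inr rfl) m z
  have hA : (⨆ v : V, ∑ j, S (z j) v ^ q₂) ≤ (C * B ^ (p₁/p₂)) ^ (q₂/q₁) := ciSup_le claim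
  have hA0 : 0 ≤ ⨆ v : V, ∑ j, S (z j) v ^ q₂ :=
    le_trans (Finset.sum_nonneg fun j _ => Real.rpow_nonneg (hS _ _) _)
      (le_ciSup hAbdd (Classical.arbitrary V))
  calc (⨆ v : V, ∑ j, S (z j) v ^ q₂) ^ (q₁ * p₂ / (q₂ * p₁))
      ≤ ((C * B ^ (p₁/p₂)) ^ (q₂/q₁)) ^ (q₁ * p₂ / (q₂ * p₁)) :=
        Real.rpow_le_rpow hA0 hA (by positivity)
    _ = C ^ (p₂/p₁) * B := by
        rw [← Real.rpow_mul (by positivity : (0:ℝ) ≤ C * B ^ (p₁/p₂))]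
        rw [show q₂/q₁ * (q₁ * p₂ / (q₂ * p₁)) = p₂/p₁ by field_simp]
        rw [Real.mul_rpow hC.le (Real.rpow_nonneg hB0 _), ← Real.rpow_mul hB0]
        rw [show p₁/p₂ * (p₂/p₁) = 1 by field_simp]
        rw [Real.rpow_one]
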